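/- Let G = (V, E) be a weakly connected directed graph. The group WR(V ∪ E, A) of rigid-balanced functions on vertices and edges is isomorphic to A^(|V|) × HR(E, A), hence to A^(|V|) × A^(|V| - k̄(G) + r(G)). -/

import Mathlib

/-- A directed multigraph: edges with a source and a target vertex. -/
structure Dgraph (V : Type) (E : Type) where
  src : E → V
  tgt : E → V

namespace Dgraph

variable {V E : Type}

/-- The symmetrization of a digraph: each edge together with its formal reversal.
`Sum.inl e` is the edge `e` itself, `Sum.inr e` is its reversal `ē`. -/
def sym (G : Dgraph V E) : Dgraph V (E ⊕ E) where
  src := Sum.elim G.src G.tgt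
  tgt := Sum.elim G.tgt G.src

/-- A cycle: a list of pairwise distinct edges, consecutively incident,
and closed (the target of the last edge is the source of the first).
The empty list is the trivial cycle. -/
def IsCycle (G : Dgraph V E) (l : List E) : Prop :=
  l.Nodup ∧ l.Chain' (fun a b => G.tgt a = G.src b) ∧
    ∀ h : l ≠ [], G.tgt (l.getLast h) = G.src (l.head h)

/-- Adjacency in the underlying undirected graph. -/
def Adj (G : Dgraph V E) (x y : V) : Prop :=
  ∃ e, (G.src e = x ∧ G.tgt e = y) ∨ (G.src e = y ∧ G.tgt e = x)

/-- Weak connectivity: the underlying undirected graph is connected. -/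
def WeaklyConnected (G : Dgraph V E) : Prop :=
  ∀ x y : V, Relation.ReflTransGen G.Adj x y

/-- The underlying undirected graph is bipartite. -/
def Bipartite (G : Dgraph V E) : Prop :=
  ∃ c : V → Bool, ∀ e, c (G.src e) ≠ c (G.tgt e)

variable (A : Type) [AddCommGroup A]

/-- A function on the symmetrized edge set taking opposite values on reversed edges. -/
def Antisym (f : E ⊕ E → A) : Prop :=
  ∀ e : E, f (Sum.inr e) = - f (Sum.inl e)

/-- A function on edges is balanced if its sum along every cycle is zero. -/
def BalancedE (G : Dgraph V E) (f : E → A) : Prop :=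
  ∀ l : List E, G.IsCycle l → (l.map f).sum = 0

/-- A pair of a function `g` on vertices and `f` on edges is balanced if the
alternating sum `g v₁ + f e₁ + ⋯ + g vₙ + f eₙ` along every cycle is zero
(the vertices of a cycle are exactly the sources of its edges). -/
def BalancedVE (G : Dgraph V E) (g : V → A) (f : E → A) : Prop :=
  ∀ l : List E, G.IsCycle l → (l.map (fun e => g (G.src e) + f e)).sum = 0

variable {A}

lemma sum_map_add (l : List E) (f g : E → A) :
    (l.map (fun e => f e + g e)).sum = (l.map f).sum + (l.map g).sum := by
  induction l with
  | nil => simp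
  | cons a t ih => simp only [List.map_cons, List.sum_cons, ih]; abel

lemma sum_map_neg (l : List E) (f : E → A) :
    (l.map (fun e => - f e)).sum = - (l.map f).sum := by
  induction l with
  | nil => simp
  | cons a t ih => simp only [List.map_cons, List.sum_cons, ih]; abel

lemma sum_map_eq_zero (l : List E) (f : E → A) (h : ∀ e, f e = 0) :
    (l.map f).sum = 0 := by
  induction l with
  | nil => simp
  | cons a t ih => simp [h, ih]

variable (A)

/-- `HF(𝔼, A)`: the group of flexible-balanced functions on the symmetrized edges. -/
def HF (G : Dgraph V E) : AddSubgroup ((E ⊕ E) → A) where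
  carrier := {f | Antisym A f ∧ BalancedE A G.sym f}
  zero_mem' :=
    ⟨fun e => by simp, fun l _ => sum_map_eq_zero l _ (fun e => by simp)⟩
  add_mem' := by
    intro f g hf hg
    refine ⟨fun e => ?_, fun l hl => ?_⟩
    · have h1 := hf.1 e; have h2 := hg.1 e
      simp only [Pi.add_apply]
      rw [h1, h2]; abel
    · have hmap : l.map (f + g) = l.map (fun e => f e + g e) := rfl
      rw [hmap, sum_map_add l f g, hf.2 l hl, hg.2 l hl, add_zero]
  neg_mem' := by
    intro f hf
    refine ⟨fun e => ?_, fun l hl => ?_⟩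
    · simp only [Pi.neg_apply]; rw [hf.1 e]
    · have hmap : l.map (-f) = l.map (fun e => - f e) := rfl
      rw [hmap, sum_map_neg l f, hf.2 l hl, neg_zero]

/-- `WF(V ∪ 𝔼, A)`: the group of flexible-balanced functions on vertices and edges,
encoded as pairs (function on vertices, function on symmetrized edges). -/
def WF (G : Dgraph V E) : AddSubgroup ((V → A) × ((E ⊕ E) → A)) where
  carrier := {p | Antisym A p.2 ∧ BalancedVE A G.sym p.1 p.2}
  zero_mem' :=
    ⟨fun e => by simp, fun l _ => sum_map_eq_zero l _ (fun e => by simp)⟩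
  add_mem' := by
    intro p q hp hq
    refine ⟨fun e => ?_, fun l hl => ?_⟩
    · have h1 := hp.1 e; have h2 := hq.1 e
      simp only [Prod.snd_add, Pi.add_apply]
      rw [h1, h2]; abel
    · have h := sum_map_add l (fun e => p.1 (G.sym.src e) + p.2 e)
        (fun e => q.1 (G.sym.src e) + q.2 e)
      simp only [Prod.fst_add, Prod.snd_add, Pi.add_apply]
      have heq : (l.map (fun e => (p.1 (G.sym.src e) + q.1 (G.sym.src e)) + (p.2 e + q.2 e))).sum
          = (l.map (fun e => (p.1 (G.sym.src e) + p.2 e) + (q.1 (G.sym.src e) + q.2 e))).sum := by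
        congr 1; apply List.map_congr_left; intro e _; abel
      rw [heq, h, hp.2 l hl, hq.2 l hl, add_zero]
  neg_mem' := by
    intro p hp
    refine ⟨fun e => ?_, fun l hl => ?_⟩
    · simp only [Prod.snd_neg, Pi.neg_apply]; rw [hp.1 e]
    · have h := sum_map_neg l (fun e => p.1 (G.sym.src e) + p.2 e)
      simp only [Prod.fst_neg, Prod.snd_neg, Pi.neg_apply]
      have heq : (l.map (fun e => -p.1 (G.sym.src e) + -p.2 e)).sum
          = (l.map (fun e => -(p.1 (G.sym.src e) + p.2 e))).sum := by
        congr 1; apply List.map_congr_left; intro e _; abel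
      rw [heq, h, hp.2 l hl, neg_zero]

/-- `BF(V, A)`: the group of flexible-balanceable functions on vertices. -/
def BF (G : Dgraph V E) : AddSubgroup (V → A) where
  carrier := {g | ∃ f : (E ⊕ E) → A, (g, f) ∈ WF A G}
  zero_mem' := ⟨0, (WF A G).zero_mem⟩
  add_mem' := by
    rintro g1 g2 ⟨f1, h1⟩ ⟨f2, h2⟩
    exact ⟨f1 + f2, (WF A G).add_mem h1 h2⟩
  neg_mem' := by
    rintro g ⟨f, h⟩
    exact ⟨-f, (WF A G).neg_mem h⟩

/-- The subgroup of elements of order dividing 2. -/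
def Two : AddSubgroup A where
  carrier := {a | a + a = 0}
  zero_mem' := by simp
  add_mem' := by
    intro a b ha hb
    have h : a + b + (a + b) = (a + a) + (b + b) := by abel
    simp only [Set.mem_setOf_eq] at *
    rw [h, ha, hb, add_zero]
  neg_mem' := by
    intro a ha
    simp only [Set.mem_setOf_eq] at *
    rw [← neg_add]; simp [ha]

/-- `HR(E, A)`: the group of rigid-balanced functions on edges. -/
def HR (G : Dgraph V E) : AddSubgroup (E → A) where
  carrier := {f | BalancedE A G f}
  zero_mem' := fun l _ => sum_map_eq_zero l _ (fun e => by simp)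
  add_mem' := by
    intro f g hf hg l hl
    have hmap : l.map (f + g) = l.map (fun e => f e + g e) := rfl
    rw [hmap, sum_map_add l f g, hf l hl, hg l hl, add_zero]
  neg_mem' := by
    intro f hf l hl
    have hmap : l.map (-f) = l.map (fun e => - f e) := rfl
    rw [hmap, sum_map_neg l f, hf l hl, neg_zero]

/-- `WR(V ∪ E, A)`: the group of rigid-balanced functions on vertices and edges,
encoded as pairs (function on vertices, function on edges). -/
def WR (G : Dgraph V E) : AddSubgroup ((V → A) × (E → A)) where
  carrier := {p | BalancedVE A G p.1 p.2}
  zero_mem' := fun l _ => sum_map_eq_zero l _ (fun e => by simp)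
  add_mem' := by
    intro p q hp hq l hl
    have h := sum_map_add l (fun e => p.1 (G.src e) + p.2 e)
      (fun e => q.1 (G.src e) + q.2 e)
    simp only [Prod.fst_add, Prod.snd_add, Pi.add_apply]
    have heq : (l.map (fun e => (p.1 (G.src e) + q.1 (G.src e)) + (p.2 e + q.2 e))).sum
        = (l.map (fun e => (p.1 (G.src e) + p.2 e) + (q.1 (G.src e) + q.2 e))).sum := by
      congr 1; apply List.map_congr_left; intro e _; abel
    rw [heq, h, hp l hl, hq l hl, add_zero]
  neg_mem' := by
    intro p hp l hl
    have h := sum_map_neg l (fun e => p.1 (G.src e) + p.2 e)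
    simp only [Prod.fst_neg, Prod.snd_neg, Pi.neg_apply]
    have heq : (l.map (fun e => -p.1 (G.src e) + -p.2 e)).sum
        = (l.map (fun e => -(p.1 (G.src e) + p.2 e))).sum := by
      congr 1; apply List.map_congr_left; intro e _; abel
    rw [heq, h, hp l hl, neg_zero]

variable {A}

/-- One-step directed reachability. -/
def Step (G : Dgraph V E) (x y : V) : Prop := ∃ e, G.src e = x ∧ G.tgt e = y

/-- Directed reachability. -/
def Reach (G : Dgraph V E) : V → V → Prop := Relation.ReflTransGen G.Step

/-- Every vertex is reachable from every other vertex by a directed path. -/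
def StronglyConnected (G : Dgraph V E) : Prop := ∀ x y : V, G.Reach x y

/-- Mutual directed reachability as an equivalence (setoid) on vertices;
its classes are the strongly connected components. -/
def scSetoid (G : Dgraph V E) : Setoid V where
  r x y := G.Reach x y ∧ G.Reach y x
  iseqv := ⟨fun _ => ⟨.refl, .refl⟩, fun h => ⟨h.2, h.1⟩,
    fun h1 h2 => ⟨h1.1.trans h2.1, h2.2.trans h1.2⟩⟩

/-- The number `k̄(G)` of strongly connected components. -/
noncomputable def numSCC (G : Dgraph V E) : ℕ := Nat.card (Quotient G.scSetoid)

/-- The number `r(G)` of edges joining vertices in distinct strongly connected components. -/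
noncomputable def numCrossEdges (G : Dgraph V E) : ℕ :=
  Nat.card {e : E // ¬ G.scSetoid.r (G.src e) (G.tgt e)}

/-- A directed path from `x` to `y`: pairwise distinct, consecutively incident edges,
starting at `x` and ending at `y`; the empty path joins each vertex to itself. -/
def IsPathFrom (G : Dgraph V E) (l : List E) (x y : V) : Prop :=
  l.Nodup ∧ l.Chain' (fun a b => G.tgt a = G.src b) ∧
    ((l = [] ∧ x = y) ∨ ∃ h : l ≠ [], G.src (l.head h) = x ∧ G.tgt (l.getLast h) = y)

/-- Reorientation of the edges: edge `e` keeps its direction iff `o e = true`. -/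
def orient (G : Dgraph V E) (o : E → Bool) : Dgraph V E where
  src e := if o e then G.src e else G.tgt e
  tgt e := if o e then G.tgt e else G.src e

/-- The underlying edge of a symmetrized edge. -/
def proj : E ⊕ E → E := Sum.elim id id

/-- A cycle in the underlying *undirected* graph: edges may be traversed in either
direction, and the underlying edges are pairwise distinct. -/
def IsUCycle (G : Dgraph V E) (l : List (E ⊕ E)) : Prop :=
  (l.map proj).Nodup ∧ l.Chain' (fun a b => G.sym.tgt a = G.sym.src b) ∧
    ∀ h : l ≠ [], G.sym.tgt (l.getLast h) = G.sym.src (l.head h)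

variable (A)

/-- A function on the edges of an undirected graph is balanced if its sum along
every undirected cycle (each edge contributing its value regardless of the
traversal direction) is zero. -/
def UBalanced (G : Dgraph V E) (f : E → A) : Prop :=
  ∀ l : List (E ⊕ E), G.IsUCycle l → (l.map (fun ee => f (proj ee))).sum = 0

/-- The subgroup of functions on vertices vanishing at a chosen base vertex. -/
def vanishing (v₀ : V) : AddSubgroup (V → A) where
  carrier := {g | g v₀ = 0}
  zero_mem' := by simp
  add_mem' := by
    intro a b ha hb
    simp only [Set.mem_setOf_eq, Pi.add_apply] at *
    rw [ha, hb, add_zero]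
  neg_mem' := by
    intro a ha
    simp only [Set.mem_setOf_eq, Pi.neg_apply] at *
    rw [ha, neg_zero]

variable {A}

/-- The subgraph induced by a strongly connected component `j`. -/
def compGraph (G : Dgraph V E) (j : Quotient G.scSetoid) :
    Dgraph {v : V // Quotient.mk G.scSetoid v = j}
      {e : E // Quotient.mk G.scSetoid (G.src e) = j ∧ Quotient.mk G.scSetoid (G.tgt e) = j} where
  src e := ⟨G.src e.1, e.2.1⟩
  tgt e := ⟨G.tgt e.1, e.2.2⟩

end Dgraph


section Aux

namespace Dgraph

variable {V E : Type} {A : Type} [AddCommGroup A] {G : Dgraph V E}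

/-- An inductive directed walk. -/
inductive Walk (G : Dgraph V E) : V → V → List E → Prop
  | nil (x : V) : Walk G x x []
  | cons (e : E) {y : V} {l : List E} (h : Walk G (G.tgt e) y l) :
      Walk G (G.src e) y (e :: l)

lemma Walk.append {x y z : V} {l m : List E} (h1 : G.Walk x y l) (h2 : G.Walk y z m) :
    G.Walk x z (l ++ m) := by
  induction h1 with
  | nil => simpa using h2
  | cons e h ih => exact Walk.cons e (ih h2)

lemma Walk.split {x z : V} {l m : List E} (h : G.Walk x z (l ++ m)) :
    ∃ y, G.Walk x y l ∧ G.Walk y z m := by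
  induction l generalizing x with
  | nil => exact ⟨x, Walk.nil x, h⟩
  | cons e t ih =>
    cases h with
    | cons _ h' =>
      obtain ⟨y, h1, h2⟩ := ih h'
      exact ⟨y, Walk.cons e h1, h2⟩

lemma Walk.cons_inv {x z : V} {e : E} {l : List E} (h : G.Walk x z (e :: l)) :
    x = G.src e ∧ G.Walk (G.tgt e) z l := by
  cases h with
  | cons _ h' => exact ⟨rfl, h'⟩

lemma Walk.nil_inv {x y : V} (h : G.Walk x y []) : x = y := by
  cases h; rfl

lemma Walk.reach {x y : V} {l : List E} (h : G.Walk x y l) : G.Reach x y := by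
  induction h with
  | nil => exact .refl
  | cons e _ ih => exact .head ⟨e, rfl, rfl⟩ ih

lemma Walk.mem_reach {x y : V} {l : List E} (h : G.Walk x y l) {e : E} (he : e ∈ l) :
    G.Reach x (G.src e) ∧ G.Reach (G.tgt e) y := by
  induction h with
  | nil => simp at he
  | cons e' h ih =>
    rcases List.mem_cons.1 he with rfl | he'
    · exact ⟨.refl, h.reach⟩
    · obtain ⟨h1, h2⟩ := ih he'
      exact ⟨.head ⟨e', rfl, rfl⟩ h1, h2⟩

lemma reach_walk {x y : V} (h : G.Reach x y) : ∃ l, G.Walk x y l := by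
  induction h with
  | refl => exact ⟨[], .nil x⟩
  | tail _ hbc ih =>
    obtain ⟨l, hl⟩ := ih
    obtain ⟨e, he1, he2⟩ := hbc
    subst he1; subst he2
    exact ⟨l ++ [e], hl.append (Walk.cons e (Walk.nil _))⟩

lemma walk_of_chain {l : List E} (h : l ≠ [])
    (hc : l.Chain' (fun a b => G.tgt a = G.src b)) :
    G.Walk (G.src (l.head h)) (G.tgt (l.getLast h)) l := by
  induction l with
  | nil => exact absurd rfl h
  | cons e t ih =>
    cases t with
    | nil => exact Walk.cons e (Walk.nil _)
    | cons e2 t2 =>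
      have hR : G.tgt e = G.src e2 := (List.isChain_cons_cons.1 hc).1
      have h2 := ih (by simp) (List.isChain_cons_cons.1 hc).2
      simp only [List.head_cons] at h2 ⊢
      rw [List.getLast_cons (by simp : (e2 :: t2 : List E) ≠ [])]
      exact Walk.cons e (hR ▸ h2)

lemma Walk.chain' {x y : V} {l : List E} (h : G.Walk x y l) :
    l.Chain' (fun a b => G.tgt a = G.src b) := by
  induction h with
  | nil => exact List.isChain_nil
  | cons e h ih =>
    refine List.isChain_cons.2 ⟨?_, ih⟩
    intro b hb
    cases hl : ‹List E› with
    | nil => rw [hl] at hb; simp at hb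
    | cons b' t =>
      rw [hl] at hb h
      simp only [List.head?_cons, Option.mem_some_iff] at hb
      subst hb
      exact h.cons_inv.1

lemma Walk.src_head {x y : V} {l : List E} (h : G.Walk x y l) (hn : l ≠ []) :
    G.src (l.head hn) = x := by
  cases l with
  | nil => exact absurd rfl hn
  | cons e t => exact h.cons_inv.1.symm

lemma Walk.tgt_last {l : List E} : ∀ {x y : V}, G.Walk x y l →
    ∀ hn : l ≠ [], G.tgt (l.getLast hn) = y := by
  induction l with
  | nil => intro x y h hn; exact absurd rfl hn
  | cons e t ih =>
    intro x y h hn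
    obtain ⟨rfl, h'⟩ := h.cons_inv
    cases t with
    | nil => rw [← h'.nil_inv]; simp
    | cons b t2 =>
      rw [List.getLast_cons (by simp : (b :: t2 : List E) ≠ [])]
      exact ih h' _

lemma not_nodup_decomp {α : Type} : ∀ (l : List α), ¬ l.Nodup →
    ∃ (a : α) (l1 l2 l3 : List α), l = l1 ++ a :: (l2 ++ a :: l3)
  | [], h => absurd List.nodup_nil h
  | b :: t, h => by
    by_cases hb : b ∈ t
    · obtain ⟨s, u, rfl⟩ := List.append_of_mem hb
      exact ⟨b, [], s, u, rfl⟩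
    · have ht : ¬ t.Nodup := fun hn => h (List.nodup_cons.2 ⟨hb, hn⟩)
      obtain ⟨a, l1, l2, l3, rfl⟩ := not_nodup_decomp t ht
      exact ⟨a, b :: l1, l2, l3, rfl⟩

lemma closed_walk_sum_aux {f : E → A} (hf : Dgraph.BalancedE A G f) :
    ∀ (n : ℕ) (l : List E), l.length ≤ n → ∀ x, G.Walk x x l → (l.map f).sum = 0 := by
  intro n
  induction n with
  | zero =>
    intro l hl x hw
    rw [List.length_eq_zero_iff.1 (Nat.le_zero.1 hl)]
    simp
  | succ n ih =>
    intro l hl x hw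
    by_cases hnd : l.Nodup
    · refine hf l ⟨hnd, hw.chain', ?_⟩
      intro hne
      rw [hw.tgt_last hne, hw.src_head hne]
    · obtain ⟨a, l1, l2, l3, rfl⟩ := not_nodup_decomp _ hnd
      obtain ⟨y1, hw1, hw2⟩ := hw.split
      obtain ⟨rfl, hw3⟩ := hw2.cons_inv
      obtain ⟨y2, hw4, hw5⟩ := hw3.split
      obtain ⟨rfl, hw6⟩ := hw5.cons_inv
      have hC1 : G.Walk (G.src a) (G.src a) (a :: l2) := Walk.cons a hw4
      have hC2 : G.Walk x x (l1 ++ a :: l3) := hw1.append (Walk.cons a hw6)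
      have hlen : l1.length + (l2.length + (l3.length + 1) + 1) ≤ n + 1 := by
        simpa using hl
      have h1 : ((a :: l2).map f).sum = 0 :=
        ih (a :: l2) (by simp; omega) _ hC1
      have h2 : ((l1 ++ a :: l3).map f).sum = 0 :=
        ih (l1 ++ a :: l3) (by simp; omega) _ hC2
      have hsum : ((l1 ++ a :: (l2 ++ a :: l3)).map f).sum
          = ((l1 ++ a :: l3).map f).sum + ((a :: l2).map f).sum := by
        simp only [List.map_append, List.sum_append, List.map_cons, List.sum_cons]
        abel
      rw [hsum, h1, h2, add_zero]

lemma closed_walk_sum {f : E → A} (hf : Dgraph.BalancedE A G f)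
    {l : List E} {x : V} (hw : G.Walk x x l) : (l.map f).sum = 0 :=
  closed_walk_sum_aux hf l.length l le_rfl x hw

lemma telescope {h : V → A} {f : E → A} {l : List E} {x y : V} (hw : G.Walk x y l)
    (hfe : ∀ e ∈ l, f e = h (G.tgt e) - h (G.src e)) :
    (l.map f).sum = h y - h x := by
  induction hw with
  | nil => simp
  | cons e hw ih =>
    simp only [List.map_cons, List.sum_cons]
    rw [ih (fun e' he' => hfe e' (List.mem_cons_of_mem _ he')),
      hfe e List.mem_cons_self]
    abel

lemma cycle_walk {l : List E} (hc : G.IsCycle l) (hne : l ≠ []) :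
    G.Walk (G.src (l.head hne)) (G.src (l.head hne)) l := by
  have := walk_of_chain hne hc.2.1
  rwa [hc.2.2 hne] at this

lemma cycle_noncross {l : List E} (hc : G.IsCycle l) {e : E} (he : e ∈ l) :
    G.scSetoid.r (G.src e) (G.tgt e) := by
  have hne : l ≠ [] := by rintro rfl; simp at he
  have hw := cycle_walk hc hne
  obtain ⟨h1, h2⟩ := hw.mem_reach he
  exact ⟨.single ⟨e, rfl, rfl⟩, h2.trans h1⟩

lemma walk_noncross {x y : V} {l : List E} (hw : G.Walk x y l)
    (hxy : G.scSetoid.r x y) {e : E} (he : e ∈ l) :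
    G.scSetoid.r (G.src e) (G.tgt e) := by
  obtain ⟨h1, h2⟩ := hw.mem_reach he
  exact ⟨.single ⟨e, rfl, rfl⟩, (h2.trans hxy.2).trans h1⟩

lemma sub_helper {a b s x : A} (h1 : a + (x + s) = 0) (h2 : b + s = 0) : x = b - a := by
  have h3 : b - a = (b + s) - (a + (x + s)) + x := by abel
  rw [h1, h2] at h3
  simpa using h3.symm

variable (G)

lemma reach_out (v : V) : G.Reach (Quotient.mk G.scSetoid v).out v ∧
    G.Reach v (Quotient.mk G.scSetoid v).out := by
  have h : Quotient.mk G.scSetoid ((Quotient.mk G.scSetoid v).out) = Quotient.mk G.scSetoid v :=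
    Quotient.out_eq _
  exact Quotient.exact h

/-- A chosen directed walk from the basepoint of the component of `v` to `v`. -/
noncomputable def wlk (v : V) : List E :=
  Classical.choose (reach_walk (reach_out G v).1)

lemma wlk_spec (v : V) : G.Walk (Quotient.mk G.scSetoid v).out v (G.wlk v) :=
  Classical.choose_spec (reach_walk (reach_out G v).1)

/-- The potential of a function on edges. -/
noncomputable def pot (f : E → A) (v : V) : A := ((G.wlk v).map f).sum

lemma pot_add (f g : E → A) (v : V) : G.pot (f + g) v = G.pot f v + G.pot g v := by
  unfold pot
  rw [show (G.wlk v).map (f + g) = (G.wlk v).map (fun e => f e + g e) from rfl,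
    sum_map_add]

variable {G}

lemma pot_out {f : E → A} (hf : Dgraph.BalancedE A G f) {v : V}
    (hv : v = (Quotient.mk G.scSetoid v).out) : G.pot f v = 0 := by
  have hw := G.wlk_spec v
  rw [← hv] at hw
  exact closed_walk_sum hf hw

lemma grad {f : E → A} (hf : Dgraph.BalancedE A G f) {e : E}
    (he : G.scSetoid.r (G.src e) (G.tgt e)) :
    f e = G.pot f (G.tgt e) - G.pot f (G.src e) := by
  have hclass : Quotient.mk G.scSetoid (G.src e) = Quotient.mk G.scSetoid (G.tgt e) :=
    Quotient.sound he
  obtain ⟨R, hR⟩ := reach_walk (reach_out G (G.tgt e)).2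
  have hw1 : G.Walk (Quotient.mk G.scSetoid (G.tgt e)).out
      (Quotient.mk G.scSetoid (G.tgt e)).out (G.wlk (G.src e) ++ (e :: R)) := by
    have hs := G.wlk_spec (G.src e)
    rw [hclass] at hs
    exact hs.append (Walk.cons e hR)
  have hw2 : G.Walk (Quotient.mk G.scSetoid (G.tgt e)).out
      (Quotient.mk G.scSetoid (G.tgt e)).out (G.wlk (G.tgt e) ++ R) :=
    (G.wlk_spec (G.tgt e)).append hR
  have h1 := closed_walk_sum hf hw1
  have h2 := closed_walk_sum hf hw2
  simp only [List.map_append, List.sum_append, List.map_cons, List.sum_cons] at h1 h2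
  exact sub_helper h1 h2

variable (G) (A)

open Classical in
noncomputable def extq (q : {v : V // v ≠ (Quotient.mk G.scSetoid v).out} → A) (v : V) : A :=
  if h : v ≠ (Quotient.mk G.scSetoid v).out then q ⟨v, h⟩ else 0

open Classical in
noncomputable def inv0 (q : {v : V // v ≠ (Quotient.mk G.scSetoid v).out} → A)
    (c : {e : E // ¬ G.scSetoid.r (G.src e) (G.tgt e)} → A) (e : E) : A :=
  if h : G.scSetoid.r (G.src e) (G.tgt e)
  then extq A G q (G.tgt e) - extq A G q (G.src e) else c ⟨e, h⟩

lemma inv0_balanced (q : {v : V // v ≠ (Quotient.mk G.scSetoid v).out} → A)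
    (c : {e : E // ¬ G.scSetoid.r (G.src e) (G.tgt e)} → A) :
    Dgraph.BalancedE A G (inv0 A G q c) := by
  intro l hl
  rcases eq_or_ne l [] with rfl | hne
  · simp
  · have hw := cycle_walk hl hne
    rw [telescope (h := extq A G q) hw (fun e he => ?_), sub_self]
    unfold inv0
    rw [dif_pos (cycle_noncross hl he)]

/-- The structure isomorphism for `HR`. -/
noncomputable def hrEquiv : Dgraph.HR A G ≃+
    (({v : V // v ≠ (Quotient.mk G.scSetoid v).out} → A) ×
     ({e : E // ¬ G.scSetoid.r (G.src e) (G.tgt e)} → A)) where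
  toFun f := (fun v => G.pot (f : E → A) v.1, fun e => (f : E → A) e.1)
  invFun p := ⟨inv0 A G p.1 p.2, inv0_balanced A G p.1 p.2⟩
  left_inv := by
    rintro ⟨f, hf⟩
    apply Subtype.ext
    funext e
    show inv0 A G _ _ e = f e
    unfold inv0
    have hext : ∀ v, extq A G (fun v => G.pot f v.1) v = G.pot f v := by
      intro v
      unfold extq
      split
      · rfl
      · next h =>
        push_neg at h
        exact (pot_out hf h).symm
    split
    · next h =>
      rw [hext, hext]
      exact (grad hf h).symm
    · rfl
  right_inv := by
    rintro ⟨q, c⟩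
    refine Prod.ext ?_ ?_
    · funext v
      show G.pot (inv0 A G q c) v.1 = q v
      have hw := G.wlk_spec v.1
      have hr : G.scSetoid.r (Quotient.mk G.scSetoid v.1).out v.1 := reach_out G v.1
      rw [pot, telescope (h := extq A G q) hw (fun e he => ?_)]
      · rw [show extq A G q v.1 = q v by unfold extq; rw [dif_pos v.2],
          show extq A G q (Quotient.mk G.scSetoid v.1).out = 0 from ?_, sub_zero]
        unfold extq
        rw [dif_neg]
        push_neg
        exact congrArg Quotient.out (Quotient.out_eq _).symm
      · unfold inv0
        rw [dif_pos (walk_noncross hw hr he)]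
    · funext e
      show inv0 A G q c e.1 = c e
      unfold inv0
      rw [dif_neg e.2]
  map_add' f g := by
    refine Prod.ext ?_ ?_
    · funext v
      show G.pot ((f + g : Dgraph.HR A G) : E → A) v.1 = G.pot f v.1 + G.pot g v.1
      rw [show ((f + g : Dgraph.HR A G) : E → A) = (f : E → A) + (g : E → A) from rfl,
        pot_add]
    · rfl

/-- The isomorphism `WR ≃+ (V → A) × HR`. -/
noncomputable def wrEquiv : Dgraph.WR A G ≃+ ((V → A) × Dgraph.HR A G) where
  toFun p := (p.1.1, ⟨fun e => p.1.1 (G.src e) + p.1.2 e, p.2⟩)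
  invFun p := ⟨(p.1, fun e => (p.2 : E → A) e - p.1 (G.src e)), by
    intro l hl
    have : (l.map (fun e => p.1 (G.src e) + ((p.2 : E → A) e - p.1 (G.src e))))
        = l.map (p.2 : E → A) := by
      apply List.map_congr_left
      intro e _
      abel
    show (l.map _).sum = 0
    rw [this]
    exact p.2.2 l hl⟩
  left_inv := by
    rintro ⟨⟨g, f⟩, hp⟩
    apply Subtype.ext
    refine Prod.ext rfl ?_
    funext e
    exact add_sub_cancel_left _ _
  right_inv := by
    rintro ⟨g, f⟩
    refine Prod.ext rfl ?_
    apply Subtype.ext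
    funext e
    show g (G.src e) + ((f : E → A) e - g (G.src e)) = (f : E → A) e
    abel
  map_add' p q := by
    refine Prod.ext rfl ?_
    apply Subtype.ext
    funext e
    show (p.1.1 + q.1.1) (G.src e) + (p.1.2 + q.1.2) e
        = (p.1.1 (G.src e) + p.1.2 e) + (q.1.1 (G.src e) + q.1.2 e)
    simp only [Pi.add_apply]
    abel

/-- Additive version of `Equiv.sumArrowEquivProdArrow`. -/
def sumArrowAddEquiv (S1 S2 : Type) :
    ((S1 ⊕ S2) → A) ≃+ ((S1 → A) × (S2 → A)) :=
  { Equiv.sumArrowEquivProdArrow S1 S2 A with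
    map_add' := fun f g => rfl }

/-- Additive version of domain transport. -/
def arrowCongrLeft {S T : Type} (e : S ≃ T) : (S → A) ≃+ (T → A) :=
  { Equiv.arrowCongr e (Equiv.refl A) with
    map_add' := fun f g => rfl }

end Dgraph

end Aux


/-- For a finite weakly connected directed graph, the group
`WR(V ∪ E, A)` of rigid-balanced functions on vertices and edges is isomorphic to
`A^(|V|) × HR(E, A)`, hence to `A^(|V|) × A^(|V| - k̄(G) + r(G))`. -/
theorem stmt11 (V E : Type) [Fintype V] [Fintype E] (A : Type) [AddCommGroup A]
    (G : Dgraph V E) (hG : G.WeaklyConnected) :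
    Nonempty (Dgraph.WR A G ≃+ ((V → A) × Dgraph.HR A G)) ∧
    Nonempty (Dgraph.WR A G ≃+
      ((V → A) × (Fin (Nat.card V - G.numSCC + G.numCrossEdges) → A))) := by
  classical
  constructor
  · exact ⟨Dgraph.wrEquiv A G⟩
  · have eQ : {v : V // v = (Quotient.mk G.scSetoid v).out} ≃ Quotient G.scSetoid :=
      { toFun := fun v => Quotient.mk _ v.1
        invFun := fun j => ⟨j.out, by rw [Quotient.out_eq]⟩
        left_inv := fun v => Subtype.ext v.2.symm
        right_inv := fun j => Quotient.out_eq j }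
    have hcard : Fintype.card ({v : V // v ≠ (Quotient.mk G.scSetoid v).out} ⊕
        {e : E // ¬ G.scSetoid.r (G.src e) (G.tgt e)})
        = Nat.card V - G.numSCC + G.numCrossEdges := by
      rw [Fintype.card_sum]
      have h1 : Fintype.card {v : V // v ≠ (Quotient.mk G.scSetoid v).out}
          = Fintype.card V - Fintype.card (Quotient G.scSetoid) := by
        rw [← Fintype.card_congr eQ]
        exact Fintype.card_subtype_compl _
      rw [h1, Dgraph.numSCC, Dgraph.numCrossEdges, Nat.card_eq_fintype_card,
        Nat.card_eq_fintype_card, Nat.card_eq_fintype_card]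
    have eqv := Fintype.equivFinOfCardEq hcard
    exact ⟨(Dgraph.wrEquiv A G).trans (AddEquiv.prodCongr (AddEquiv.refl _)
      ((Dgraph.hrEquiv A G).trans ((Dgraph.sumArrowAddEquiv A _ _).symm.trans
        (Dgraph.arrowCongrLeft A eqv))))⟩
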